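/- Let p be a prime and d = ⌊(p-1)n/3⌋. The target set of any perfectly matched sequence in F_p^n has at most 3·dim L_{n,d} elements, where L_{n,d} is the span of monomials with all exponents ≤ p-1 and total degree ≤ d. -/

import Mathlib

open MvPolynomial

/-- `L n d` (over `𝔽_p`): the span of monomials with all exponents `≤ p - 1`
and total degree `≤ d`. -/
noncomputable def Lspace (p n : ℕ) [Fact p.Prime] (d : ℕ) :
    Submodule (ZMod p) (MvPolynomial (Fin n) (ZMod p)) :=
  Submodule.span (ZMod p)
    {f | ∃ α : Fin n →₀ ℕ, (∀ i, α i ≤ p - 1) ∧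
      (α.sum fun _ e => e) ≤ d ∧ f = monomial α 1}

section AuxLemmas

open Module Submodule


lemma exists_big_support {F ι : Type*} [Field F] [DecidableEq F] [Fintype ι] [DecidableEq ι]
    (W : Submodule F (ι → F)) :
    ∃ h ∈ W, Module.finrank F W ≤ (Finset.univ.filter fun i => h i ≠ 0).card := by
  classical
  set e : ι → Module.Dual F W := fun i => (LinearMap.proj i).comp W.subtype with he
  have hspan : Submodule.span F (Set.range e) = ⊤ := by
    have hco : (Submodule.span F (Set.range e)).dualCoannihilator = ⊥ := by
      rw [Submodule.eq_bot_iff]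
      intro w hw
      rw [Submodule.mem_dualCoannihilator] at hw
      have : (w : ι → F) = 0 := by
        funext i
        exact hw (e i) (Submodule.subset_span (Set.mem_range_self i))
      exact Subtype.ext this
    have h1 := Subspace.finrank_add_finrank_dualCoannihilator_eq
      (Submodule.span F (Set.range e))
    rw [hco, finrank_bot, add_zero] at h1
    apply Submodule.eq_top_of_finrank_eq
    rw [h1, Subspace.dual_finrank_eq]
  obtain ⟨bs, hsub, hspan2, hli⟩ := exists_linearIndependent F (Set.range e)
  rw [hspan] at hspan2
  have hfin : bs.Finite := by
    have : FiniteDimensional F (Module.Dual F W) := inferInstance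
    exact hli.setFinite
  have : Fintype bs := hfin.fintype
  let B : Basis bs F (Module.Dual F W) := Basis.mk hli (by rw [Subtype.range_coe, hspan2])
  have hcardbs : Fintype.card bs = finrank F W := by
    rw [← Module.finrank_eq_card_basis B, Subspace.dual_finrank_eq]
  -- choose indices
  have hidx : ∀ φ : bs, ∃ i : ι, e i = (φ : Module.Dual F W) := fun φ => hsub φ.2
  choose idx hidxspec using hidx
  have hidxinj : Function.Injective idx := by
    intro φ ψ h
    apply Subtype.ext
    rw [← hidxspec φ, ← hidxspec ψ, h]
  -- the evaluation map
  let Φ : W →ₗ[F] (bs → F) := LinearMap.pi fun φ => (φ : Module.Dual F W)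
  have hinj : Function.Injective Φ := by
    rw [← LinearMap.ker_eq_bot, Submodule.eq_bot_iff]
    intro w hw
    rw [LinearMap.mem_ker] at hw
    have hall : ∀ ψ : Module.Dual F W, ψ w = 0 := by
      intro ψ
      have hψ : ψ ∈ Submodule.span F bs := by rw [hspan2]; trivial
      induction hψ using Submodule.span_induction with
      | mem x hx => exact congrFun hw ⟨x, hx⟩
      | zero => simp
      | add x y _ _ hx hy => simp [hx, hy]
      | smul c x _ hx => simp [hx]
    exact (Module.forall_dual_apply_eq_zero_iff F w).mp hall
  have hsurj : Function.Surjective Φ := by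
    have hfr : finrank F W = finrank F (bs → F) := by
      rw [Module.finrank_pi, hcardbs]
    exact (LinearMap.injective_iff_surjective_of_finrank_eq_finrank hfr).mp hinj
  obtain ⟨w, hw⟩ := hsurj 1
  refine ⟨(w : ι → F), w.2, ?_⟩
  have hsub2 : Finset.univ.image idx ⊆ Finset.univ.filter fun i => (w : ι → F) i ≠ 0 := by
    intro i hi
    rw [Finset.mem_image] at hi
    obtain ⟨φ, -, rfl⟩ := hi
    rw [Finset.mem_filter]
    refine ⟨Finset.mem_univ _, ?_⟩
    have h1 : e (idx φ) w = 1 := by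
      rw [hidxspec φ]
      exact congrFun hw φ
    have h2 : e (idx φ) w = (w : ι → F) (idx φ) := rfl
    rw [h2] at h1
    simp [h1]
  calc finrank F W = Fintype.card bs := hcardbs.symm
    _ = (Finset.univ.image idx).card := by rw [Finset.card_image_of_injective _ hidxinj, Finset.card_univ]
    _ ≤ _ := Finset.card_le_card hsub2


lemma slice_rank_diag {F : Type*} [Field F] [DecidableEq F] {ι : Type*} [Fintype ι]
    [DecidableEq ι] {A : Type*} [DecidableEq A] (R1 R2 R3 : Finset A)
    (f1 : A → ι → F) (g1 : A → ι → ι → F)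
    (f2 : A → ι → F) (g2 : A → ι → ι → F)
    (f3 : A → ι → F) (g3 : A → ι → ι → F)
    (c : ι → F) (hc : ∀ i, c i ≠ 0)
    (hT : ∀ i j k, ((∑ r ∈ R1, f1 r i * g1 r j k) + (∑ r ∈ R2, f2 r j * g2 r i k)
        + (∑ r ∈ R3, f3 r k * g3 r i j)) = if i = j ∧ j = k then c i else 0) :
    Fintype.card ι ≤ R1.card + R2.card + R3.card := by
  classical
  -- contraction map against the third slices
  let φ : (ι → F) →ₗ[F] (↥R3 → F) :=
    LinearMap.pi fun r => ∑ k, f3 r.1 k • LinearMap.proj k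
  have hφ : ∀ (h : ι → F) (r : ↥R3), φ h r = ∑ k, f3 r.1 k * h k := by
    intro h r
    simp [φ, LinearMap.pi_apply, LinearMap.sum_apply]
  obtain ⟨h, hhK, hsupp⟩ := exists_big_support (LinearMap.ker φ)
  have hzero : ∀ r ∈ R3, ∑ k, f3 r k * h k = 0 := by
    intro r hr
    have := congrFun (LinearMap.mem_ker.mp hhK) ⟨r, hr⟩
    rwa [hφ] at this
  -- the contracted matrix identity
  have hM : ∀ i j, ((∑ r ∈ R1, (∑ k, g1 r j k * h k) * f1 r i)
      + (∑ r ∈ R2, f2 r j * (∑ k, g2 r i k * h k)))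
      = if i = j then c i * h i else 0 := by
    intro i j
    have key : ∑ k, (if i = j ∧ j = k then c i else 0) * h k
        = if i = j then c i * h i else 0 := by
      by_cases hij : i = j
      · subst hij
        simp [Finset.sum_ite_eq, mul_comm]
      · simp [hij]
    calc ((∑ r ∈ R1, (∑ k, g1 r j k * h k) * f1 r i)
          + (∑ r ∈ R2, f2 r j * (∑ k, g2 r i k * h k)))
        = ∑ k, ((∑ r ∈ R1, f1 r i * g1 r j k) + (∑ r ∈ R2, f2 r j * g2 r i k)
            + (∑ r ∈ R3, f3 r k * g3 r i j)) * h k := by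
          have e1 : ∀ k : ι, ((∑ r ∈ R1, f1 r i * g1 r j k) + (∑ r ∈ R2, f2 r j * g2 r i k)
              + (∑ r ∈ R3, f3 r k * g3 r i j)) * h k
              = (∑ r ∈ R1, (g1 r j k * h k) * f1 r i)
                + (∑ r ∈ R2, f2 r j * (g2 r i k * h k))
                + (∑ r ∈ R3, (f3 r k * h k) * g3 r i j) := by
            intro k
            rw [add_mul, add_mul, Finset.sum_mul, Finset.sum_mul, Finset.sum_mul]
            congr 1
            · congr 1
              · exact Finset.sum_congr rfl fun r _ => by ring
              · exact Finset.sum_congr rfl fun r _ => by ring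
            · exact Finset.sum_congr rfl fun r _ => by ring
          rw [Finset.sum_congr rfl fun k _ => e1 k]
          rw [Finset.sum_add_distrib, Finset.sum_add_distrib]
          rw [Finset.sum_comm (s := Finset.univ) (t := R1),
            Finset.sum_comm (s := Finset.univ) (t := R2),
            Finset.sum_comm (s := Finset.univ) (t := R3)]
          have h3 : ∑ r ∈ R3, ∑ k, (f3 r k * h k) * g3 r i j = 0 := by
            refine Finset.sum_eq_zero fun r hr => ?_
            rw [← Finset.sum_mul, hzero r hr, zero_mul]
          rw [h3, add_zero]
          congr 1
          · exact Finset.sum_congr rfl fun r _ => by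
              rw [← Finset.sum_mul]
          · exact Finset.sum_congr rfl fun r _ => by
              rw [← Finset.mul_sum]
      _ = ∑ k, (if i = j ∧ j = k then c i else 0) * h k := by
          exact Finset.sum_congr rfl fun k _ => by rw [hT]
      _ = _ := key
  -- column space
  let gens : Finset (ι → F) :=
    (R1.image fun r => fun i => f1 r i) ∪ (R2.image fun r => fun i => ∑ k, g2 r i k * h k)
  let U : Submodule F (ι → F) := Submodule.span F (gens : Set (ι → F))
  have hU : Module.finrank F U ≤ R1.card + R2.card := by
    calc Module.finrank F U ≤ gens.card := finrank_span_finset_le_card gens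
      _ ≤ _ := (Finset.card_union_le _ _).trans
          (add_le_add (Finset.card_image_le) (Finset.card_image_le))
  -- columns lie in U
  have hcol : ∀ j : ι, (fun i => if i = j then c i * h i else 0) ∈ U := by
    intro j
    have : (fun i => if i = j then c i * h i else 0)
        = (∑ r ∈ R1, (∑ k, g1 r j k * h k) • (fun i => f1 r i))
          + (∑ r ∈ R2, (f2 r j) • (fun i => ∑ k, g2 r i k * h k)) := by
      funext i
      simp only [Pi.add_apply, Finset.sum_apply, Pi.smul_apply, smul_eq_mul]
      rw [← hM i j]
    rw [this]
    apply Submodule.add_mem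
    · refine Submodule.sum_mem _ fun r hr => Submodule.smul_mem _ _ (Submodule.subset_span ?_)
      exact Finset.mem_coe.mpr (Finset.mem_union_left _ (Finset.mem_image_of_mem _ hr))
    · refine Submodule.sum_mem _ fun r hr => Submodule.smul_mem _ _ (Submodule.subset_span ?_)
      exact Finset.mem_coe.mpr (Finset.mem_union_right _ (Finset.mem_image_of_mem _ hr))
  -- linear independence of the nonzero columns
  set supp : Finset ι := Finset.univ.filter fun i => h i ≠ 0 with hsuppdef
  have hli : LinearIndependent F (fun j : ↥supp => (fun i => if i = j.1 then c i * h i else 0 : ι → F)) := by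
    have hbase : LinearIndependent F (fun j : ↥supp => (Pi.single j.1 1 : ι → F)) := by
      have h0 := (Pi.basisFun F ι).linearIndependent.comp (Subtype.val : ↥supp → ι)
        Subtype.val_injective
      have he : ⇑(Pi.basisFun F ι) ∘ (Subtype.val : ↥supp → ι)
          = fun j : ↥supp => (Pi.single j.1 1 : ι → F) := by
        funext j; simp
      rwa [he] at h0
    have := hbase.units_smul fun j : ↥supp =>
      Units.mk0 (c j.1 * h j.1) (mul_ne_zero (hc j.1) ((Finset.mem_filter.mp j.2).2))
    convert this using 1
    funext j
    funext i
    simp only [Pi.smul_apply', Units.smul_def, Pi.smul_apply, Units.val_mk0, smul_eq_mul,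
      Pi.single_apply]
    by_cases hij : i = j.1
    · subst hij; simp
    · simp [hij]
  have hcard : supp.card ≤ R1.card + R2.card := by
    have hliU : LinearIndependent F (fun j : ↥supp =>
        (⟨(fun i => if i = j.1 then c i * h i else 0), hcol j.1⟩ : U)) := by
      apply LinearIndependent.of_comp U.subtype
      exact hli
    have h2 := hliU.fintype_card_le_finrank
    rw [Fintype.card_coe] at h2
    exact h2.trans hU
  -- rank-nullity conclusion
  have hrn := LinearMap.finrank_range_add_finrank_ker φ
  have hrange : Module.finrank F (LinearMap.range φ) ≤ R3.card := by
    calc Module.finrank F (LinearMap.range φ) ≤ Module.finrank F (↥R3 → F) :=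
        (LinearMap.range φ).finrank_le
      _ = R3.card := by rw [Module.finrank_pi, Fintype.card_coe]
  have hpi : Module.finrank F (ι → F) = Fintype.card ι := by
    rw [Module.finrank_pi]
  calc Fintype.card ι = Module.finrank F (LinearMap.range φ)
        + Module.finrank F (LinearMap.ker φ) := by rw [hrn, hpi]
    _ ≤ R3.card + supp.card := add_le_add hrange hsupp
    _ ≤ R3.card + (R1.card + R2.card) := by exact Nat.add_le_add_left hcard _
    _ = _ := by ring



section Expansion

variable {p : ℕ} [hpf : Fact p.Prime]

/-- exponent reduction mod the multiplicative order -/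
def redE (p e : ℕ) : ℕ := if e = 0 then 0 else (e - 1) % (p - 1) + 1

lemma redE_le_self (p e : ℕ) : redE p e ≤ e := by
  unfold redE
  split
  · omega
  · have := Nat.mod_le (e - 1) (p - 1); omega

lemma redE_le (hp : 2 ≤ p) (e : ℕ) : redE p e ≤ p - 1 := by
  unfold redE
  split
  · omega
  · have : (e - 1) % (p - 1) < p - 1 := Nat.mod_lt _ (by omega)
    omega

lemma pow_redE (x : ZMod p) (e : ℕ) : x ^ e = x ^ redE p e := by
  have hp2 : 2 ≤ p := hpf.out.two_le
  rcases Nat.eq_zero_or_pos e with he | he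
  · subst he; rfl
  have hred : redE p e = (e - 1) % (p - 1) + 1 := by
    unfold redE; rw [if_neg (by omega : ¬ e = 0)]
  by_cases hx : x = 0
  · subst hx
    rw [zero_pow (by omega), zero_pow (by rw [hred]; omega)]
  · have h1 : x ^ (p - 1) = 1 := ZMod.pow_card_sub_one_eq_one hx
    have hdm : (p - 1) * ((e - 1) / (p - 1)) + (e - 1) % (p - 1) = e - 1 :=
      Nat.div_add_mod (e - 1) (p - 1)
    calc x ^ e = x ^ ((p - 1) * ((e - 1) / (p - 1)) + ((e - 1) % (p - 1) + 1)) := by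
          congr 1; omega
      _ = (x ^ (p - 1)) ^ ((e - 1) / (p - 1)) * x ^ ((e - 1) % (p - 1) + 1) := by
          rw [pow_add, pow_mul]
      _ = x ^ redE p e := by rw [h1, one_pow, one_mul, hred]

/-- monomial evaluation -/
def mon {n : ℕ} (x : Fin n → ZMod p) (α : Fin n → ℕ) : ZMod p := ∏ l, x l ^ α l

lemma mon_red {n : ℕ} (x : Fin n → ZMod p) (α : Fin n → ℕ) :
    mon x α = mon x fun l => redE p (α l) :=
  Finset.prod_congr rfl fun l _ => pow_redE _ _

lemma prod_one_sub_pow {n : ℕ} (z : Fin n → ZMod p) :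
    ∏ l, (1 - z l ^ (p - 1)) = if z = 0 then 1 else 0 := by
  have hp2 : 2 ≤ p := hpf.out.two_le
  by_cases hz : z = 0
  · subst hz
    simp [zero_pow (show p - 1 ≠ 0 by omega)]
  · rw [if_neg hz]
    obtain ⟨l, hl⟩ := Function.ne_iff.mp hz
    refine Finset.prod_eq_zero (Finset.mem_univ l) ?_
    rw [ZMod.pow_card_sub_one_eq_one (by simpa using hl), sub_self]

variable (p) in
/-- the Croot-Lev-Pach polynomial -/
noncomputable def clp (n : ℕ) : MvPolynomial (Fin 3 × Fin n) (ZMod p) :=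
  ∏ l : Fin n, (1 - (X (0, l) + X (1, l) + X (2, l)) ^ (p - 1))

lemma clp_support_deg {n : ℕ} {α : Fin 3 × Fin n →₀ ℕ} (hα : α ∈ (clp p n).support) :
    ∑ q : Fin 3 × Fin n, α q ≤ (p - 1) * n := by
  haveI : Nontrivial (ZMod p) := by
    haveI : Fact (1 < p) := ⟨hpf.out.one_lt⟩
    infer_instance
  have h1 : (α.sum fun _ e => e) ≤ (clp p n).totalDegree := le_totalDegree hα
  have h2 : (α.sum fun _ e => e) = ∑ q : Fin 3 × Fin n, α q :=
    Finsupp.sum_fintype _ _ fun _ => rfl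
  have h3 : (clp p n).totalDegree ≤ (p - 1) * n := by
    refine (totalDegree_finset_prod _ _).trans ?_
    have hfac : ∀ l : Fin n,
        (1 - (X (0, l) + X (1, l) + X (2, l) : MvPolynomial (Fin 3 × Fin n) (ZMod p))
          ^ (p - 1)).totalDegree ≤ p - 1 := by
      intro l
      refine (totalDegree_sub _ _).trans ?_
      rw [totalDegree_one]
      refine max_le (Nat.zero_le _) ?_
      refine (totalDegree_pow _ _).trans ?_
      have : (X (0, l) + X (1, l) + X (2, l) :
          MvPolynomial (Fin 3 × Fin n) (ZMod p)).totalDegree ≤ 1 := by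
        refine (totalDegree_add _ _).trans (max_le ((totalDegree_add _ _).trans (max_le ?_ ?_)) ?_)
          <;> rw [totalDegree_X]
      calc (p - 1) * (X (0, l) + X (1, l) + X (2, l) :
            MvPolynomial (Fin 3 × Fin n) (ZMod p)).totalDegree ≤ (p - 1) * 1 :=
            Nat.mul_le_mul_left _ this
        _ = p - 1 := Nat.mul_one _
    calc ∑ l : Fin n, (1 - (X (0, l) + X (1, l) + X (2, l) :
          MvPolynomial (Fin 3 × Fin n) (ZMod p)) ^ (p - 1)).totalDegree
        ≤ ∑ _l : Fin n, (p - 1) := Finset.sum_le_sum fun l _ => hfac l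
      _ = (p - 1) * n := by rw [Finset.sum_const, Finset.card_univ, Fintype.card_fin,
            smul_eq_mul, mul_comm]
  omega

lemma clp_eval {n : ℕ} (u v w : Fin n → ZMod p) :
    ∏ l, (1 - (u l + v l + w l) ^ (p - 1))
      = ∑ α ∈ (clp p n).support, (clp p n).coeff α
          * (mon u fun l => α (0, l)) * (mon v fun l => α (1, l))
          * (mon w fun l => α (2, l)) := by
  have hev : eval (fun q : Fin 3 × Fin n => ![u, v, w] q.1 q.2) (clp p n)
      = ∏ l, (1 - (u l + v l + w l) ^ (p - 1)) := by
    rw [clp, map_prod]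
    refine Finset.prod_congr rfl fun l _ => ?_
    simp [Matrix.cons_val_zero, Matrix.cons_val_one, Matrix.head_cons]
  rw [← hev, eval_eq']
  refine Finset.sum_congr rfl fun α _ => ?_
  rw [Fintype.prod_prod_type]
  rw [show (Finset.univ : Finset (Fin 3)) = {0, 1, 2} by decide]
  rw [Finset.prod_insert (by decide), Finset.prod_insert (by decide), Finset.prod_singleton]
  simp only [Matrix.cons_val_zero, Matrix.cons_val_one, Matrix.head_cons]
  rw [mon, mon, mon]
  have h2 : ∀ l : Fin n, ![u, v, w] 2 l = w l := fun l => rfl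
  simp only [h2]
  ring

end Expansion


lemma finrank_Lspace (p n d : ℕ) [hpf : Fact p.Prime] :
    Module.finrank (ZMod p) (Lspace p n d)
      = ((Fintype.piFinset fun _ : Fin n => Finset.range p).filter
          fun α : Fin n → ℕ => (∑ l, α l) ≤ d).card := by
  classical
  have hp1 : 1 ≤ p := hpf.out.one_lt.le.trans' (by omega)
  set B : Finset (Fin n → ℕ) := (Fintype.piFinset fun _ : Fin n => Finset.range p).filter
    fun α : Fin n → ℕ => (∑ l, α l) ≤ d with hB
  set Bf : Finset (Fin n →₀ ℕ) := B.map (Finsupp.equivFunOnFinite.symm.toEmbedding) with hBf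
  have hmem : ∀ α : Fin n →₀ ℕ, α ∈ Bf ↔ ((∀ i, α i ≤ p - 1) ∧ (α.sum fun _ e => e) ≤ d) := by
    intro α
    rw [hBf, Finset.mem_map_equiv, Equiv.symm_symm]
    rw [hB, Finset.mem_filter, Fintype.mem_piFinset]
    have hsum : (α.sum fun _ e => e) = ∑ l, α l := Finsupp.sum_fintype _ _ fun _ => rfl
    constructor
    · rintro ⟨h1, h2⟩
      refine ⟨fun i => ?_, by rw [hsum]; simpa [Finsupp.equivFunOnFinite_apply] using h2⟩
      have := h1 i
      rw [Finset.mem_range] at this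
      simp only [Finsupp.equivFunOnFinite_apply] at this ⊢
      omega
    · rintro ⟨h1, h2⟩
      refine ⟨fun i => ?_, by simpa [Finsupp.equivFunOnFinite_apply, ← hsum] using h2⟩
      rw [Finset.mem_range]
      have := h1 i
      simp only [Finsupp.equivFunOnFinite_apply]
      omega
  have hset : {f : MvPolynomial (Fin n) (ZMod p) | ∃ α : Fin n →₀ ℕ, (∀ i, α i ≤ p - 1) ∧
      (α.sum fun _ e => e) ≤ d ∧ f = monomial α 1}
      = Set.range fun α : ↥Bf => (monomial α.1 1 : MvPolynomial (Fin n) (ZMod p)) := by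
    ext f
    constructor
    · rintro ⟨α, h1, h2, rfl⟩
      exact ⟨⟨α, (hmem α).mpr ⟨h1, h2⟩⟩, rfl⟩
    · rintro ⟨⟨α, hα⟩, rfl⟩
      obtain ⟨h1, h2⟩ := (hmem α).mp hα
      exact ⟨α, h1, h2, rfl⟩
  have hli : LinearIndependent (ZMod p)
      (fun α : ↥Bf => (monomial α.1 1 : MvPolynomial (Fin n) (ZMod p))) := by
    have h0 := (basisMonomials (Fin n) (ZMod p)).linearIndependent.comp
      (Subtype.val : ↥Bf → (Fin n →₀ ℕ)) Subtype.val_injective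
    have he : ⇑(basisMonomials (Fin n) (ZMod p)) ∘ (Subtype.val : ↥Bf → (Fin n →₀ ℕ))
        = fun α : ↥Bf => (monomial α.1 1 : MvPolynomial (Fin n) (ZMod p)) := by
      funext α
      simp [coe_basisMonomials]
    rwa [he] at h0
  rw [Lspace, hset, finrank_span_eq_card hli, Fintype.card_coe, Finset.card_map]


end AuxLemmas

/-- The target set of any perfectly matched sequence in `𝔽_pⁿ` has at most
`3 * dim L_{n,d}` elements, where `d = ⌊(p-1)n/3⌋`. -/
theorem stmt12 (p n m : ℕ) [Fact p.Prime]
    (a b : Fin m → (Fin n → ZMod p))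
    (hpm : ∀ i j k, a i + b i = a j + b k → j = k) :
    (Set.range fun i => a i + b i).ncard ≤
      3 * Module.finrank (ZMod p) (Lspace p n ((p - 1) * n / 3)) := by
  classical
  have hp : p.Prime := Fact.out
  have hp2 : 2 ≤ p := hp.two_le
  set d : ℕ := (p - 1) * n / 3 with hd
  set T : Fin m → (Fin n → ZMod p) := fun i => a i + b i with hT'
  haveI : Fintype ↥(Set.range T) := (Set.finite_range T).fintype
  set ι := ↥(Set.range T)
  have hncard : (Set.range T).ncard = Fintype.card ι := by
    rw [← Nat.card_coe_set_eq, Nat.card_eq_fintype_card]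
  set r : ι → Fin m := Set.rangeSplitting T with hrdef
  have hr : ∀ i : ι, T (r i) = (i : Fin n → ZMod p) := fun i => Set.apply_rangeSplitting T i
  -- the finset of small monomial exponents
  set B : Finset (Fin n → ℕ) := (Fintype.piFinset fun _ : Fin n => Finset.range p).filter
    (fun α : Fin n → ℕ => (∑ l, α l) ≤ d) with hB
  -- reduced exponent extraction
  set q0 : (Fin 3 × Fin n →₀ ℕ) → (Fin n → ℕ) := fun α l => redE p (α (0, l)) with hq0
  set q1 : (Fin 3 × Fin n →₀ ℕ) → (Fin n → ℕ) := fun α l => redE p (α (1, l)) with hq1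
  set q2 : (Fin 3 × Fin n →₀ ℕ) → (Fin n → ℕ) := fun α l => redE p (α (2, l)) with hq2
  set S : Finset (Fin 3 × Fin n →₀ ℕ) := (clp p n).support with hS
  set S1 : Finset (Fin 3 × Fin n →₀ ℕ) := S.filter (fun α => ∑ l, q0 α l ≤ d) with hS1
  set S2 : Finset (Fin 3 × Fin n →₀ ℕ) :=
    S.filter (fun α => ¬ (∑ l, q0 α l ≤ d) ∧ ∑ l, q1 α l ≤ d) with hS2
  set S3 : Finset (Fin 3 × Fin n →₀ ℕ) :=
    S.filter (fun α => ¬ (∑ l, q0 α l ≤ d) ∧ ¬ (∑ l, q1 α l ≤ d)) with hS3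
  have hS3small : ∀ α ∈ S3, ∑ l, q2 α l ≤ d := by
    intro α hα
    rw [hS3, Finset.mem_filter] at hα
    obtain ⟨hαS, hn0, hn1⟩ := hα
    have hdeg := clp_support_deg (hS ▸ hαS)
    have hsplit : ∑ q : Fin 3 × Fin n, α q
        = (∑ l, α (0, l)) + (∑ l, α (1, l)) + (∑ l, α (2, l)) := by
      rw [Fintype.sum_prod_type, Fin.sum_univ_three]
    have h0 : ∑ l, q0 α l ≤ ∑ l, α (0, l) :=
      Finset.sum_le_sum fun l _ => redE_le_self p _
    have h1 : ∑ l, q1 α l ≤ ∑ l, α (1, l) :=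
      Finset.sum_le_sum fun l _ => redE_le_self p _
    have h2 : ∑ l, q2 α l ≤ ∑ l, α (2, l) :=
      Finset.sum_le_sum fun l _ => redE_le_self p _
    have hdm := Nat.div_add_mod ((p - 1) * n) 3
    have hmod : (p - 1) * n % 3 < 3 := Nat.mod_lt _ (by omega)
    by_contra hcon
    omega
  -- maps-to properties
  have hmemB : ∀ (α : Fin 3 × Fin n →₀ ℕ) (f : Fin n → ℕ),
      (∀ l, f l ≤ p - 1) → (∑ l, f l ≤ d) → f ∈ B := by
    intro α f hle hsum
    rw [hB, Finset.mem_filter, Fintype.mem_piFinset]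
    exact ⟨fun l => Finset.mem_range.mpr (by have := hle l; omega), hsum⟩
  have hmap1 : ∀ α ∈ S1, q0 α ∈ B := by
    intro α hα
    rw [hS1, Finset.mem_filter] at hα
    exact hmemB α _ (fun l => redE_le hp2 _) hα.2
  have hmap2 : ∀ α ∈ S2, q1 α ∈ B := by
    intro α hα
    rw [hS2, Finset.mem_filter] at hα
    exact hmemB α _ (fun l => redE_le hp2 _) hα.2.2
  have hmap3 : ∀ α ∈ S3, q2 α ∈ B := by
    intro α hα
    exact hmemB α _ (fun l => redE_le hp2 _) (hS3small α hα)
  -- the three-fold evaluation vectors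
  set av : ι → Fin n → ZMod p := fun i => a (r i) with hav
  set bv : ι → Fin n → ZMod p := fun i => b (r i) with hbv
  set wv : ι → Fin n → ZMod p := fun k => -(k : Fin n → ZMod p) with hwv
  set C : (Fin 3 × Fin n →₀ ℕ) → ZMod p := fun α => (clp p n).coeff α with hC
  -- diagonal structure
  have hdiag : ∀ i j k : ι,
      ∏ l, (1 - (av i l + bv j l + wv k l) ^ (p - 1))
        = if i = j ∧ j = k then (1 : ZMod p) else 0 := by
    intro i j k
    have hz : ∏ l, (1 - (av i + bv j + wv k) l ^ (p - 1))
        = if (av i + bv j + wv k) = 0 then (1 : ZMod p) else 0 := prod_one_sub_pow _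
    have hzeq : ((av i + bv j + wv k) = 0) ↔ (i = j ∧ j = k) := by
      constructor
      · intro h
        have heq : a (r i) + b (r j) = (k : Fin n → ZMod p) := by
          have := h
          rw [hav, hbv, hwv] at this
          have h2 := congrArg (fun z => z + (k : Fin n → ZMod p)) this
          simpa [add_assoc] using h2
        have h3 : a (r k) + b (r k) = (k : Fin n → ZMod p) := hr k
        have heq2 : a (r k) + b (r k) = a (r i) + b (r j) := h3.trans heq.symm
        have hrij : r i = r j := hpm (r k) (r i) (r j) heq2
        have h4 : a (r i) + b (r i) = (i : Fin n → ZMod p) := hr i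
        have h5 : b (r i) = b (r j) := by rw [hrij]
        have hik : (i : Fin n → ZMod p) = (k : Fin n → ZMod p) := by
          rw [← h4, h5, heq]
        have h6 : a (r j) + b (r j) = (j : Fin n → ZMod p) := hr j
        have hij : (i : Fin n → ZMod p) = (j : Fin n → ZMod p) := by
          rw [← h4, ← h6, hrij]
        exact ⟨Subtype.ext hij, Subtype.ext (hij ▸ hik)⟩
      · rintro ⟨rfl, rfl⟩
        have h4 : a (r i) + b (r i) = (i : Fin n → ZMod p) := hr i
        simp only [hav, hbv, hwv]
        rw [h4]
        simp
    calc ∏ l, (1 - (av i l + bv j l + wv k l) ^ (p - 1))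
        = if av i + bv j + wv k = 0 then (1 : ZMod p) else 0 := by
          rw [← hz]
          exact Finset.prod_congr rfl fun l _ => rfl
      _ = if i = j ∧ j = k then (1 : ZMod p) else 0 := by
          by_cases hcond : av i + bv j + wv k = 0
          · rw [if_pos hcond, if_pos (hzeq.mp hcond)]
          · rw [if_neg hcond, if_neg (fun hc => hcond (hzeq.mpr hc))]
  -- the slice decomposition
  set f1 : (Fin n → ℕ) → ι → ZMod p := fun β i => mon (av i) β with hf1
  set g1 : (Fin n → ℕ) → ι → ι → ZMod p := fun β j k =>
    ∑ α ∈ S1.filter (fun α => q0 α = β), C α * mon (bv j) (q1 α) * mon (wv k) (q2 α) with hg1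
  set f2 : (Fin n → ℕ) → ι → ZMod p := fun β j => mon (bv j) β with hf2
  set g2 : (Fin n → ℕ) → ι → ι → ZMod p := fun β i k =>
    ∑ α ∈ S2.filter (fun α => q1 α = β), C α * mon (av i) (q0 α) * mon (wv k) (q2 α) with hg2
  set f3 : (Fin n → ℕ) → ι → ZMod p := fun β k => mon (wv k) β with hf3
  set g3 : (Fin n → ℕ) → ι → ι → ZMod p := fun β i j =>
    ∑ α ∈ S3.filter (fun α => q2 α = β), C α * mon (av i) (q0 α) * mon (bv j) (q1 α) with hg3
  have hTmain : ∀ i j k : ι,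
      ((∑ β ∈ B, f1 β i * g1 β j k) + (∑ β ∈ B, f2 β j * g2 β i k)
        + (∑ β ∈ B, f3 β k * g3 β i j)) = if i = j ∧ j = k then (1 : ZMod p) else 0 := by
    intro i j k
    rw [← hdiag i j k, clp_eval (av i) (bv j) (wv k)]
    have hred : ∀ α : Fin 3 × Fin n →₀ ℕ,
        (clp p n).coeff α * (mon (av i) fun l => α (0, l)) * (mon (bv j) fun l => α (1, l))
          * (mon (wv k) fun l => α (2, l))
        = C α * mon (av i) (q0 α) * mon (bv j) (q1 α) * mon (wv k) (q2 α) := by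
      intro α
      rw [hC, hq0, hq1, hq2, mon_red (av i), mon_red (bv j), mon_red (wv k)]
    rw [Finset.sum_congr rfl fun α _ => hred α]
    -- split the support into the three pieces
    have hsplit : ∑ α ∈ S, C α * mon (av i) (q0 α) * mon (bv j) (q1 α) * mon (wv k) (q2 α)
        = (∑ α ∈ S1, C α * mon (av i) (q0 α) * mon (bv j) (q1 α) * mon (wv k) (q2 α))
          + (∑ α ∈ S2, C α * mon (av i) (q0 α) * mon (bv j) (q1 α) * mon (wv k) (q2 α))
          + (∑ α ∈ S3, C α * mon (av i) (q0 α) * mon (bv j) (q1 α) * mon (wv k) (q2 α)) := by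
      rw [hS1, hS2, hS3]
      rw [← Finset.sum_filter_add_sum_filter_not S (fun α => ∑ l, q0 α l ≤ d)]
      rw [← Finset.sum_filter_add_sum_filter_not
        (S.filter (fun α => ¬ (∑ l, q0 α l ≤ d))) (fun α => ∑ l, q1 α l ≤ d)]
      rw [Finset.filter_filter, Finset.filter_filter]
      ring
    rw [hS] at hsplit
    rw [hsplit]
    congr 1
    · congr 1
      · -- first piece
        rw [← Finset.sum_fiberwise_of_maps_to hmap1
          (fun α => C α * mon (av i) (q0 α) * mon (bv j) (q1 α) * mon (wv k) (q2 α))]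
        refine Finset.sum_congr rfl fun β _ => ?_
        rw [hf1, hg1, Finset.mul_sum]
        refine Finset.sum_congr rfl fun α hα => ?_
        rw [Finset.mem_filter] at hα
        rw [hα.2]
        ring
      · -- second piece
        rw [← Finset.sum_fiberwise_of_maps_to hmap2
          (fun α => C α * mon (av i) (q0 α) * mon (bv j) (q1 α) * mon (wv k) (q2 α))]
        refine Finset.sum_congr rfl fun β _ => ?_
        rw [hf2, hg2, Finset.mul_sum]
        refine Finset.sum_congr rfl fun α hα => ?_
        rw [Finset.mem_filter] at hα
        rw [hα.2]
        ring
    · -- third piece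
      rw [← Finset.sum_fiberwise_of_maps_to hmap3
        (fun α => C α * mon (av i) (q0 α) * mon (bv j) (q1 α) * mon (wv k) (q2 α))]
      refine Finset.sum_congr rfl fun β _ => ?_
      rw [hf3, hg3, Finset.mul_sum]
      refine Finset.sum_congr rfl fun α hα => ?_
      rw [Finset.mem_filter] at hα
      rw [hα.2]
      ring
  have hcard := slice_rank_diag B B B f1 g1 f2 g2 f3 g3 (fun _ => (1 : ZMod p))
    (fun _ => one_ne_zero) hTmain
  rw [hncard]
  calc Fintype.card ι ≤ B.card + B.card + B.card := hcard
    _ = 3 * B.card := by ring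
    _ = 3 * Module.finrank (ZMod p) (Lspace p n d) := by rw [finrank_Lspace p n d]
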